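/- There are precisely two nonvacuous samplings that are both doubly uniform and nonoverlapping uniform: the serial sampling (P(Ŝ = {i}) = 1/n for each i) and the fully parallel sampling (P(Ŝ = {1,...,n}) = 1). Equivalently: if Ŝ is doubly uniform, nonoverlapping uniform, and P(Ŝ = ∅) = 0, then either Ŝ generates only singletons or Ŝ = {1,...,n} with probability 1. -/

import Mathlib

open Finset

/-- **Classification of nonvacuous DU ∩ NU samplings.** If a sampling `Ŝ` of `{1,...,n}` is
doubly uniform, nonoverlapping uniform (its pmf is uniform over the parts of a partition of
`{1,...,n}`), and nonvacuous (`P(Ŝ = ∅) = 0`), then either `Ŝ` generates only singletons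
(serial sampling) or `Ŝ = {1,...,n}` with probability 1 (fully parallel sampling). -/
theorem du_nu_classification
    (n : ℕ) (P : Finset (Fin n) → ℝ)
    (hP : ∀ S, 0 ≤ P S) (hsum : ∑ S : Finset (Fin n), P S = 1)
    (hDU : ∀ S S' : Finset (Fin n), S.card = S'.card → P S = P S')
    (hNU : ∃ Part : Finpartition (univ : Finset (Fin n)),
      ∀ S, P S = if S ∈ Part.parts then ((Part.parts.card : ℝ))⁻¹ else 0)
    (hnonvac : P ∅ = 0) :
    (∀ S, 0 < P S → S.card = 1) ∨ P univ = 1 := by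
  obtain ⟨Part, hPart⟩ := hNU
  have hdisj : (Part.parts : Set (Finset (Fin n))).PairwiseDisjoint id :=
    Part.supIndep.pairwiseDisjoint
  by_cases hu : (univ : Finset (Fin n)) ∈ Part.parts
  · right
    have hparts : Part.parts = {univ} := by
      apply Finset.eq_singleton_iff_unique_mem.mpr
      refine ⟨hu, fun t ht => ?_⟩
      by_contra htne
      have hd : Disjoint t (univ : Finset (Fin n)) := hdisj ht hu htne
      have : t = ∅ := by simpa using hd.eq_bot_of_le le_top
      exact Part.bot_notMem (by rwa [this, ← Finset.bot_eq_empty] at ht)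
    rw [hPart univ, if_pos hu, hparts]
    simp
  · left
    intro S hS
    have hSmem : S ∈ Part.parts := by
      by_contra h
      rw [hPart S, if_neg h] at hS
      exact lt_irrefl 0 hS
    have hSne : S ≠ ∅ := fun h => Part.bot_notMem (by rwa [h, ← Finset.bot_eq_empty] at hSmem)
    have hSnuniv : S ≠ univ := fun h => hu (h ▸ hSmem)
    by_contra hcard
    have h1 : 1 ≤ S.card := Finset.card_pos.mpr (Finset.nonempty_iff_ne_empty.mpr hSne)
    have h2 : 2 ≤ S.card := by omega
    -- get b ∉ S
    obtain ⟨b, hb⟩ : ∃ b, b ∉ S := by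
      by_contra h
      push_neg at h
      exact hSnuniv (Finset.eq_univ_iff_forall.mpr h)
    -- get a ≠ c in S
    obtain ⟨a, ha, c, hc, hac⟩ := Finset.one_lt_card.mp h2
    set S' : Finset (Fin n) := insert b (S.erase a) with hS'def
    have hbS' : b ∈ S' := Finset.mem_insert_self _ _
    have hcS' : c ∈ S' := Finset.mem_insert_of_mem (Finset.mem_erase.mpr ⟨fun h => hac h.symm, hc⟩)
    have hcardeq : S.card = S'.card := by
      rw [hS'def, Finset.card_insert_of_notMem (fun h => hb (Finset.mem_of_mem_erase h)),
        Finset.card_erase_of_mem ha]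
      omega
    have hPS' : 0 < P S' := by rw [← hDU S S' hcardeq]; exact hS
    have hS'mem : S' ∈ Part.parts := by
      by_contra h
      rw [hPart S', if_neg h] at hPS'
      exact lt_irrefl 0 hPS'
    have hne : S ≠ S' := fun h => hb (h ▸ hbS')
    have hd : Disjoint S S' := hdisj hSmem hS'mem hne
    exact (Finset.disjoint_left.mp hd hc) hcS'
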